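/- Let d ≥ 1 and let G ⊆ ℝ^d be a domain. Then the topological hull T(G) is a domain, and moreover every connected component of ℝ^d \ T(G) is unbounded (so that T(G) is full, i.e. T(T(G)) = T(G)). -/

import Mathlib

open Set Metric Bornology

/-- Šura-Bura type lemma: in a compact Hausdorff space, if the connected component of `x`
is contained in an open set `U`, then there is a clopen set `Z` with `x ∈ Z ⊆ U`. -/
lemma suraBura {X : Type*} [TopologicalSpace X] [T2Space X] [CompactSpace X]
    {x : X} {U : Set X} (hU : IsOpen U) (h : connectedComponent x ⊆ U) :
    ∃ Z : Set X, IsClopen Z ∧ x ∈ Z ∧ Z ⊆ U := by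
  have H1 := hU.isClosed_compl.isCompact.inter_iInter_nonempty
    (fun s : { s : Set X // IsClopen s ∧ x ∈ s } => (s : Set X)) fun s => s.2.1.1
  rw [← not_disjoint_iff_nonempty_inter, imp_not_comm, not_forall] at H1
  have hd2 : Disjoint Uᶜ (⋂ s : { s : Set X // IsClopen s ∧ x ∈ s }, (s : Set X)) := by
    rw [← connectedComponent_eq_iInter_isClopen]
    exact disjoint_compl_left_iff_subset.2 h
  obtain ⟨si, H2⟩ := H1 hd2
  rw [not_nonempty_iff_eq_empty] at H2
  exact ⟨⋂ s ∈ si, (s : Set X), isClopen_biInter_finset fun s _ => s.2.1,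
    mem_iInter₂.2 fun s _ => s.2.2,
    disjoint_compl_left_iff_subset.1 (disjoint_iff_inter_eq_empty.2 H2)⟩

lemma isClosed_connectedComponentIn' {E : Type*} [TopologicalSpace E] {F : Set E}
    (hF : IsClosed F) (x : E) : IsClosed (connectedComponentIn F x) := by
  by_cases hx : x ∈ F
  · rw [connectedComponentIn_eq_image hx]
    exact hF.isClosedEmbedding_subtypeVal.isClosed_iff_image_isClosed.1
      isClosed_connectedComponent
  · rw [connectedComponentIn_eq_empty hx]; exact isClosed_empty

/-- If the connected component of `x` in a closed set `F` (in a proper metric space) is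
bounded, then there is an open neighbourhood `O` of `x` such that `F ∩ O` is bounded and
saturated for components of `F`. -/
lemma bounded_component_stable {E : Type*} [MetricSpace E] [ProperSpace E]
    {F : Set E} (hF : IsClosed F) {x : E} (hx : x ∈ F)
    (hb : Bornology.IsBounded (connectedComponentIn F x)) :
    ∃ O : Set E, IsOpen O ∧ x ∈ O ∧ Bornology.IsBounded (F ∩ O) ∧
      ∀ y ∈ F ∩ O, connectedComponentIn F y ⊆ F ∩ O := by
  obtain ⟨r, hr⟩ := hb.subset_closedBall x
  set R : ℝ := max r 0 + 1 with hRdef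
  have hR0 : 0 < R := by positivity
  have hCball : connectedComponentIn F x ⊆ ball x R :=
    hr.trans (closedBall_subset_ball (by simp [hRdef]; linarith [le_max_left r 0]))
  set K := F ∩ closedBall x (R + 1) with hKdef
  have hKcomp : IsCompact K := (isCompact_closedBall x (R + 1)).inter_left hF
  have hxK : x ∈ K := ⟨hx, mem_closedBall_self (by positivity)⟩
  have hCK : connectedComponentIn F x ⊆ K :=
    subset_inter (connectedComponentIn_subset F x)
      (hCball.trans (ball_subset_closedBall.trans (closedBall_subset_closedBall (by linarith))))
  have hCeq : connectedComponentIn K x = connectedComponentIn F x := by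
    apply subset_antisymm (connectedComponentIn_mono x inter_subset_left)
    exact isPreconnected_connectedComponentIn.subset_connectedComponentIn
      (mem_connectedComponentIn hx) hCK
  haveI : CompactSpace K := isCompact_iff_compactSpace.1 hKcomp
  have himg : connectedComponentIn K x = (↑) '' connectedComponent (⟨x, hxK⟩ : K) :=
    connectedComponentIn_eq_image hxK
  have hsub : connectedComponent (⟨x, hxK⟩ : K) ⊆ ((↑) : K → E) ⁻¹' ball x R := by
    intro z hz
    have hz' : (z : E) ∈ connectedComponentIn K x := by
      rw [himg]; exact mem_image_of_mem _ hz
    exact hCball (hCeq ▸ hz')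
  obtain ⟨Z, hZcl, hxZ, hZU⟩ := suraBura (isOpen_ball.preimage continuous_subtype_val) hsub
  obtain ⟨O₀, hO₀, hZO₀⟩ := isOpen_induced_iff.1 hZcl.2
  have hLeq : F ∩ (O₀ ∩ ball x R) = ((↑) : K → E) '' Z := by
    apply subset_antisymm
    · rintro y ⟨hyF, hyO₀, hyball⟩
      have hyK : y ∈ K := ⟨hyF, ball_subset_closedBall.trans
        (closedBall_subset_closedBall (by linarith)) hyball⟩
      have : (⟨y, hyK⟩ : K) ∈ Z := by rw [← hZO₀]; exact hyO₀
      exact ⟨⟨y, hyK⟩, this, rfl⟩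
    · rintro y ⟨z, hzZ, rfl⟩
      refine ⟨z.2.1, ?_, hZU hzZ⟩
      rw [← hZO₀] at hzZ; exact hzZ
  have hLclosed : IsClosed (F ∩ (O₀ ∩ ball x R)) := by
    rw [hLeq]
    exact (hZcl.1.isCompact.image continuous_subtype_val).isClosed
  refine ⟨O₀ ∩ ball x R, hO₀.inter isOpen_ball, ⟨?_, mem_ball_self hR0⟩, ?_, ?_⟩
  · rw [← hZO₀] at hxZ; exact hxZ
  · exact isBounded_ball.subset fun y hy => hy.2.2
  · intro y hy
    have hyF : y ∈ F := hy.1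
    have hclopen : IsClopen (((↑) : F → E) ⁻¹' (F ∩ (O₀ ∩ ball x R))) := by
      constructor
      · exact hLclosed.preimage continuous_subtype_val
      · have : ((↑) : F → E) ⁻¹' (F ∩ (O₀ ∩ ball x R)) =
            ((↑) : F → E) ⁻¹' (O₀ ∩ ball x R) := by
          ext z; simp [z.2]
        rw [this]
        exact (hO₀.inter isOpen_ball).preimage continuous_subtype_val
    have hsub2 : connectedComponent (⟨y, hyF⟩ : F) ⊆
        ((↑) : F → E) ⁻¹' (F ∩ (O₀ ∩ ball x R)) :=
      hclopen.connectedComponent_subset hy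
    rw [connectedComponentIn_eq_image hyF]
    exact (image_mono hsub2).trans (image_preimage_subset _ _)

/-- The set of points of a closed set `F` whose component in `F` is unbounded is closed. -/
lemma isClosed_unbddSet {E : Type*} [MetricSpace E] [ProperSpace E]
    {F : Set E} (hF : IsClosed F) :
    IsClosed {x | x ∈ F ∧ ¬ Bornology.IsBounded (connectedComponentIn F x)} := by
  rw [← closure_subset_iff_isClosed]
  intro x hxA
  have hxF : x ∈ F := by
    have : closure {x | x ∈ F ∧ ¬ Bornology.IsBounded (connectedComponentIn F x)} ⊆ F :=
      hF.closure_subset_iff.2 fun y hy => hy.1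
    exact this hxA
  refine ⟨hxF, fun hb => ?_⟩
  obtain ⟨O, hOopen, hxO, hObdd, hOcomp⟩ := bounded_component_stable hF hxF hb
  obtain ⟨y, hyO, hyA⟩ := mem_closure_iff.1 hxA O hOopen hxO
  exact hyA.2 (hObdd.subset (hOcomp y ⟨hyA.1, hyO⟩))

/-- The topological hull `T(G)` of a set `G ⊆ ℝ^d`: the union of `G` with the
bounded connected components of the complement `ℝ^d \ G`. -/
def topHull {d : ℕ} (G : Set (EuclideanSpace ℝ (Fin d))) : Set (EuclideanSpace ℝ (Fin d)) :=
  G ∪ {x | x ∈ Gᶜ ∧ Bornology.IsBounded (connectedComponentIn Gᶜ x)}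

/-- If `G ⊆ ℝ^d` (`d ≥ 1`) is a domain (nonempty connected open set), then its
topological hull `T(G)` is a domain; moreover every connected component of the
complement of `T(G)` is unbounded, so that `T(T(G)) = T(G)`, i.e. `T(G)` is full. -/
theorem hull_is_full_domain {d : ℕ} (hd : 1 ≤ d) (G : Set (EuclideanSpace ℝ (Fin d)))
    (hGopen : IsOpen G) (hGconn : IsConnected G) :
    IsOpen (topHull G) ∧ IsConnected (topHull G) ∧
      (∀ x ∈ (topHull G)ᶜ, ¬ Bornology.IsBounded (connectedComponentIn (topHull G)ᶜ x)) ∧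
      topHull (topHull G) = topHull G := by
  classical
  set A := {x : EuclideanSpace ℝ (Fin d) |
    x ∈ Gᶜ ∧ ¬ Bornology.IsBounded (connectedComponentIn Gᶜ x)} with hA
  have hFclosed : IsClosed Gᶜ := hGopen.isClosed_compl
  have hcompl : (topHull G)ᶜ = A := by
    ext x
    simp only [topHull, hA, Set.mem_compl_iff, Set.mem_union, Set.mem_setOf_eq, not_or, not_and]
    constructor
    · rintro ⟨h1, h2⟩
      exact ⟨h1, fun hb => h2 h1 hb⟩
    · rintro ⟨h1, h2⟩
      exact ⟨h1, fun _ => h2⟩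
  have hAclosed : IsClosed A := isClosed_unbddSet hFclosed
  have hTopen : IsOpen (topHull G) := by
    rw [← compl_compl (topHull G), hcompl]
    exact hAclosed.isOpen_compl
  have hthird : ∀ x ∈ (topHull G)ᶜ,
      ¬ Bornology.IsBounded (connectedComponentIn (topHull G)ᶜ x) := by
    intro x hx hbdd
    rw [hcompl] at hx hbdd
    have hsubA : connectedComponentIn Gᶜ x ⊆ A := by
      intro y hy
      refine ⟨connectedComponentIn_subset _ _ hy, ?_⟩
      rw [← connectedComponentIn_eq hy]
      exact hx.2
    have hsub2 : connectedComponentIn Gᶜ x ⊆ connectedComponentIn A x :=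
      isPreconnected_connectedComponentIn.subset_connectedComponentIn
        (mem_connectedComponentIn hx.1) hsubA
    exact hx.2 (hbdd.subset hsub2)
  obtain ⟨g, hg⟩ := hGconn.nonempty
  haveI : PreconnectedSpace (EuclideanSpace ℝ (Fin d)) :=
    ⟨(convex_univ : Convex ℝ (univ : Set (EuclideanSpace ℝ (Fin d)))).isPreconnected⟩
  haveI : Nontrivial (EuclideanSpace ℝ (Fin d)) := by
    refine ⟨EuclideanSpace.single (⟨0, hd⟩ : Fin d) (1 : ℝ), 0, fun h => ?_⟩
    have h1 : ‖EuclideanSpace.single (⟨0, hd⟩ : Fin d) (1 : ℝ)‖ = 1 := by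
      rw [EuclideanSpace.norm_single]; simp
    rw [h] at h1; simp at h1
  have hconn : IsConnected (topHull G) := by
    refine ⟨⟨g, Or.inl hg⟩, ?_⟩
    have key : ∀ z, z ∈ Gᶜ → Bornology.IsBounded (connectedComponentIn Gᶜ z) →
        IsPreconnected (G ∪ connectedComponentIn Gᶜ z) := by
      intro z hz hzb
      have hCne : z ∈ connectedComponentIn Gᶜ z := mem_connectedComponentIn hz
      have hyex : ∃ y, y ∈ connectedComponentIn Gᶜ z ∧ y ∈ closure G := by
        by_contra hcon
        push_neg at hcon
        have hCopen : IsOpen (connectedComponentIn Gᶜ z) := by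
          rw [Metric.isOpen_iff]
          intro y hy
          have hyG := hcon y hy
          rw [Metric.mem_closure_iff] at hyG
          push_neg at hyG
          obtain ⟨ε, hε, hball⟩ := hyG
          refine ⟨ε, hε, ?_⟩
          have hballF : ball y ε ⊆ Gᶜ := by
            intro w hw hwG
            exact absurd (hball w hwG) (not_le.2 (by rw [dist_comm]; exact hw))
          have hsub3 : ball y ε ⊆ connectedComponentIn Gᶜ y :=
            (convex_ball y ε).isPreconnected.subset_connectedComponentIn
              (mem_ball_self hε) hballF
          rwa [← connectedComponentIn_eq hy] at hsub3
        have hCclosed : IsClosed (connectedComponentIn Gᶜ z) :=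
          isClosed_connectedComponentIn' hFclosed z
        have huniv : connectedComponentIn Gᶜ z = univ :=
          IsClopen.eq_univ ⟨hCclosed, hCopen⟩ ⟨z, hCne⟩
        exact NormedSpace.unbounded_univ ℝ (EuclideanSpace ℝ (Fin d)) (huniv ▸ hzb)
      obtain ⟨y, hyC, hyG⟩ := hyex
      have h1 : IsPreconnected (G ∪ {y}) :=
        hGconn.isPreconnected.subset_closure subset_union_left
          (union_subset subset_closure (by simpa using hyG))
      have h2 : IsPreconnected ((G ∪ {y}) ∪ connectedComponentIn Gᶜ z) :=
        h1.union y (Or.inr rfl) hyC isPreconnected_connectedComponentIn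
      have heq : (G ∪ {y}) ∪ connectedComponentIn Gᶜ z = G ∪ connectedComponentIn Gᶜ z := by
        ext w
        simp only [mem_union, mem_singleton_iff]
        constructor
        · rintro ((h | h) | h)
          exacts [Or.inl h, Or.inr (h ▸ hyC), Or.inr h]
        · rintro (h | h)
          exacts [Or.inl (Or.inl h), Or.inr h]
      rwa [heq] at h2
    set c : Set (Set (EuclideanSpace ℝ (Fin d))) :=
      insert G {t | ∃ z, (z ∈ Gᶜ ∧ Bornology.IsBounded (connectedComponentIn Gᶜ z)) ∧
        t = G ∪ connectedComponentIn Gᶜ z} with hc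
    have hTeq : topHull G = ⋃₀ c := by
      ext w
      simp only [topHull, mem_union, mem_setOf_eq]
      constructor
      · rintro (hw | hw)
        · exact ⟨G, Or.inl rfl, hw⟩
        · exact ⟨G ∪ connectedComponentIn Gᶜ w, Or.inr ⟨w, hw, rfl⟩,
            Or.inr (mem_connectedComponentIn hw.1)⟩
      · rintro ⟨t, ht, hw⟩
        rcases ht with rfl | ⟨z, hz, rfl⟩
        · exact Or.inl hw
        · rcases hw with hw | hw
          · exact Or.inl hw
          · refine Or.inr ⟨connectedComponentIn_subset _ _ hw, ?_⟩
            rw [← connectedComponentIn_eq hw]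
            exact hz.2
    rw [hTeq]
    apply isPreconnected_sUnion g
    · rintro t (rfl | ⟨z, hz, rfl⟩)
      exacts [hg, Or.inl hg]
    · rintro t (rfl | ⟨z, hz, rfl⟩)
      exacts [hGconn.isPreconnected, key z hz.1 hz.2]
  have hempty : {x | x ∈ (topHull G)ᶜ ∧
      Bornology.IsBounded (connectedComponentIn (topHull G)ᶜ x)} =
      (∅ : Set (EuclideanSpace ℝ (Fin d))) := by
    ext x
    simp only [mem_setOf_eq, mem_empty_iff_false, iff_false, not_and]
    exact fun h1 h2 => hthird x h1 h2
  have hfourth : topHull (topHull G) = topHull G := by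
    show topHull G ∪ _ = topHull G
    rw [hempty, union_empty]
  exact ⟨hTopen, hconn, hthird, hfourth⟩
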